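/- The formal power series F_k(x) = Σ_n f_k(n) x^n, where f_k(n) counts ordered rooted binary trees of size n with largest caterpillar subtree of size at most k (k ≥ 2), satisfies F_k = x + F_k^2 − 2^{k−1} x^{k+1}. -/

import Mathlib

/-- Ordered rooted binary trees: a tree is a leaf or an internal node with two ordered children. -/
inductive BTree where
  | leaf : BTree
  | node : BTree → BTree → BTree

/-- Size of a tree = number of leaves. -/
def BTree.size : BTree → ℕ
  | .leaf => 1
  | .node l r => l.size + r.size

/-- A tree is a caterpillar if every internal node has at least one leaf child. -/
def BTree.isCaterpillar : BTree → Prop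
  | .leaf => True
  | .node l r => (l = .leaf ∨ r = .leaf) ∧ l.isCaterpillar ∧ r.isCaterpillar

/-- The list of all subtrees (rooted at some node) of a tree. -/
def BTree.subtrees : BTree → List BTree
  | .leaf => [.leaf]
  | .node l r => .node l r :: (l.subtrees ++ r.subtrees)

/-- γ(t): the size of the biggest caterpillar subtree of `t`. -/
noncomputable def BTree.gamma (t : BTree) : ℕ :=
  sSup {m | ∃ s ∈ t.subtrees, s.isCaterpillar ∧ s.size = m}

/-- `fcount k n`: number of ordered rooted binary trees of size `n` with γ ≤ k. -/
noncomputable def fcount (k n : ℕ) : ℕ :=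
  Nat.card {t : BTree // t.size = n ∧ t.gamma ≤ k}

/-! ### Auxiliary material -/

deriving instance DecidableEq for BTree

namespace BTree

lemma one_le_size (t : BTree) : 1 ≤ t.size := by
  induction t with
  | leaf => simp [size]
  | node l r ihl ihr => simp only [size]; omega

@[simp] lemma size_leaf : (BTree.leaf).size = 1 := rfl
@[simp] lemma size_node (l r : BTree) : (BTree.node l r).size = l.size + r.size := rfl

@[simp] lemma cat_leaf : (BTree.leaf).isCaterpillar := trivial

lemma cat_node_iff (l r : BTree) :
    (BTree.node l r).isCaterpillar ↔
      (l = .leaf ∨ r = .leaf) ∧ l.isCaterpillar ∧ r.isCaterpillar := Iff.rfl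

instance decCat : ∀ t : BTree, Decidable t.isCaterpillar
  | .leaf => isTrue trivial
  | .node l r =>
    letI := decCat l
    letI := decCat r
    decidable_of_iff _ (cat_node_iff l r).symm

lemma leaf_mem_subtrees (t : BTree) : BTree.leaf ∈ t.subtrees := by
  induction t with
  | leaf => simp [subtrees]
  | node l r ihl ihr => simp only [subtrees, List.mem_cons, List.mem_append]; tauto

lemma self_mem_subtrees (t : BTree) : t ∈ t.subtrees := by
  cases t <;> simp [subtrees]

lemma size_le_of_mem_subtrees {s : BTree} : ∀ {t : BTree}, s ∈ t.subtrees → s.size ≤ t.size := by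
  intro t
  induction t with
  | leaf => intro h; simp [subtrees] at h; subst h; exact le_rfl
  | node l r ihl ihr =>
    intro h
    simp only [subtrees, List.mem_cons, List.mem_append] at h
    rcases h with h | h | h
    · subst h; exact le_rfl
    · exact (ihl h).trans (by simp only [size_node]; omega)
    · exact (ihr h).trans (by simp only [size_node]; omega)

lemma cat_of_mem_subtrees : ∀ {t : BTree}, t.isCaterpillar → ∀ s ∈ t.subtrees, s.isCaterpillar := by
  intro t
  induction t with
  | leaf => intro _ s hs; simp [subtrees] at hs; subst hs; trivial
  | node l r ihl ihr =>
    intro ht s hs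
    simp only [subtrees, List.mem_cons, List.mem_append] at hs
    rcases hs with h | h | h
    · subst h; exact ht
    · exact ihl ht.2.1 s h
    · exact ihr ht.2.2 s h

/-- All caterpillar subtrees have size at most `k`. -/
def Good (k : ℕ) (t : BTree) : Prop := ∀ s ∈ t.subtrees, s.isCaterpillar → s.size ≤ k

lemma gamma_le_iff (k : ℕ) (t : BTree) : t.gamma ≤ k ↔ Good k t := by
  unfold gamma
  constructor
  · intro h s hs hc
    have hb : BddAbove {m | ∃ s ∈ t.subtrees, s.isCaterpillar ∧ s.size = m} := by
      refine ⟨t.size, ?_⟩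
      rintro m ⟨s, hs, -, rfl⟩
      exact size_le_of_mem_subtrees hs
    exact le_trans (le_csSup hb ⟨s, hs, hc, rfl⟩) h
  · intro h
    refine csSup_le ⟨1, ?_⟩ ?_
    · exact ⟨BTree.leaf, leaf_mem_subtrees t, trivial, rfl⟩
    · rintro m ⟨s, hs, hc, rfl⟩
      exact h s hs hc

lemma good_node_iff (k : ℕ) (l r : BTree) :
    Good k (BTree.node l r) ↔
      Good k l ∧ Good k r ∧ ((BTree.node l r).isCaterpillar → l.size + r.size ≤ k) := by
  constructor
  · intro h
    refine ⟨fun s hs hc => h s ?_ hc, fun s hs hc => h s ?_ hc, fun hc => h _ (self_mem_subtrees _) hc⟩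
    · simp only [subtrees, List.mem_cons, List.mem_append]; tauto
    · simp only [subtrees, List.mem_cons, List.mem_append]; tauto
  · rintro ⟨hl, hr, hn⟩ s hs hc
    simp only [subtrees, List.mem_cons, List.mem_append] at hs
    rcases hs with h | h | h
    · subst h; exact hn hc
    · exact hl s h hc
    · exact hr s h hc

lemma good_of_cat {k : ℕ} {t : BTree} (h : t.size ≤ k) : Good k t :=
  fun s hs _ => (size_le_of_mem_subtrees hs).trans h

lemma size_le_of_good_cat {k : ℕ} {t : BTree} (hg : Good k t) (hc : t.isCaterpillar) :
    t.size ≤ k := hg t (self_mem_subtrees t) hc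

/-! ### Finiteness -/

lemma finite_size : ∀ n : ℕ, {t : BTree | t.size = n}.Finite := by
  intro n
  induction n using Nat.strong_induction_on with
  | _ n ih =>
    apply Set.Finite.subset (s := insert BTree.leaf
      (⋃ a ∈ Finset.Ico 1 n, Set.image2 BTree.node {t | t.size = a} {t | t.size = n - a}))
    · apply Set.Finite.insert
      apply Set.Finite.biUnion (Finset.Ico 1 n).finite_toSet
      intro a ha
      rw [Finset.mem_coe, Finset.mem_Ico] at ha
      exact Set.Finite.image2 _ (ih a ha.2) (ih (n - a) (by omega))
    · rintro t ht
      simp only [Set.mem_setOf_eq] at ht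
      cases t with
      | leaf => exact Set.mem_insert _ _
      | node l r =>
        refine Set.mem_insert_iff.mpr (Or.inr ?_)
        have h1 := one_le_size l
        have h2 := one_le_size r
        simp only [size_node] at ht
        refine Set.mem_biUnion (show l.size ∈ Finset.Ico 1 n from ?_) ?_
        · rw [Finset.mem_Ico]; omega
        · exact ⟨l, by simp, r, by simp; omega, rfl⟩

lemma finite_size_le (n : ℕ) : {t : BTree | t.size ≤ n}.Finite := by
  apply Set.Finite.subset (s := ⋃ a ∈ Finset.range (n + 1), {t : BTree | t.size = a})
  · exact Set.Finite.biUnion (Finset.range (n + 1)).finite_toSet fun a _ => finite_size a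
  · intro t ht
    exact Set.mem_biUnion (Finset.mem_range.mpr (Nat.lt_succ_of_le ht)) rfl

instance finGood (k n : ℕ) : Finite {t : BTree // t.size = n ∧ Good k t} := by
  have : {t : BTree | t.size = n ∧ Good k t} ⊆ {t : BTree | t.size = n} := fun t ht => ht.1
  exact ((finite_size n).subset this).to_subtype

instance finPair (k n : ℕ) :
    Finite {p : BTree × BTree // p.1.size + p.2.size = n ∧ Good k p.1 ∧ Good k p.2} := by
  have : {p : BTree × BTree | p.1.size + p.2.size = n ∧ Good k p.1 ∧ Good k p.2} ⊆
      {t : BTree | t.size ≤ n} ×ˢ {t : BTree | t.size ≤ n} := by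
    rintro ⟨l, r⟩ ⟨h, -⟩
    have h' : l.size + r.size = n := h
    have := one_le_size l; have := one_le_size r
    exact ⟨show l.size ≤ n by omega, show r.size ≤ n by omega⟩
  exact (((finite_size_le n).prod (finite_size_le n)).subset this).to_subtype

instance finBad (k n : ℕ) :
    Finite {p : BTree × BTree // p.1.size + p.2.size = n ∧ Good k p.1 ∧ Good k p.2 ∧
      (BTree.node p.1 p.2).isCaterpillar ∧ k < n} := by
  have : {p : BTree × BTree | p.1.size + p.2.size = n ∧ Good k p.1 ∧ Good k p.2 ∧
      (BTree.node p.1 p.2).isCaterpillar ∧ k < n} ⊆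
      {t : BTree | t.size ≤ n} ×ˢ {t : BTree | t.size ≤ n} := by
    rintro ⟨l, r⟩ ⟨h, -⟩
    have h' : l.size + r.size = n := h
    have := one_le_size l; have := one_le_size r
    exact ⟨show l.size ≤ n by omega, show r.size ≤ n by omega⟩
  exact (((finite_size_le n).prod (finite_size_le n)).subset this).to_subtype

instance finCat (m : ℕ) : Finite {t : BTree // t.isCaterpillar ∧ t.size = m} := by
  have : {t : BTree | t.isCaterpillar ∧ t.size = m} ⊆ {t : BTree | t.size = m} := fun t ht => ht.2
  exact ((finite_size m).subset this).to_subtype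

/-! ### Counting caterpillars -/

lemma card_cat : ∀ m : ℕ, 2 ≤ m →
    Nat.card {t : BTree // t.isCaterpillar ∧ t.size = m} = 2 ^ (m - 2) := by
  intro m hm
  induction m, hm using Nat.le_induction with
  | base =>
    have : Nat.card Unit = Nat.card {t : BTree // t.isCaterpillar ∧ t.size = 2} := by
      apply Nat.card_eq_of_bijective
        (fun _ => ⟨BTree.node .leaf .leaf, ⟨Or.inl rfl, trivial, trivial⟩, rfl⟩)
      constructor
      · intro a b _; rfl
      · rintro ⟨t, hc, hs⟩
        cases t with
        | leaf => simp at hs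
        | node l r =>
          have h1 := one_le_size l
          have h2 := one_le_size r
          simp only [size_node] at hs
          have hl : l.size = 1 := by omega
          have hr : r.size = 1 := by omega
          have hl' : l = .leaf := by
            cases l with
            | leaf => rfl
            | node a b => have := one_le_size a; have := one_le_size b; simp at hl; omega
          have hr' : r = .leaf := by
            cases r with
            | leaf => rfl
            | node a b => have := one_le_size a; have := one_le_size b; simp at hr; omega
          subst hl'; subst hr'
          exact ⟨PUnit.unit, rfl⟩
    rw [← this]
    simp
  | succ m hm ih =>
    have key : Nat.card (Bool × {t : BTree // t.isCaterpillar ∧ t.size = m}) =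
        Nat.card {t : BTree // t.isCaterpillar ∧ t.size = m + 1} := by
      apply Nat.card_eq_of_bijective (fun p =>
        match p with
        | (true, ⟨c, hc, hs⟩) => ⟨BTree.node .leaf c, ⟨Or.inl rfl, trivial, hc⟩,
            by simp [hs]; omega⟩
        | (false, ⟨c, hc, hs⟩) => ⟨BTree.node c .leaf, ⟨Or.inr rfl, hc, trivial⟩,
            by simp [hs]⟩)
      constructor
      · rintro ⟨(_|_), c, hc, hs⟩ ⟨(_|_), c', hc', hs'⟩ h <;>
          simp only [Subtype.mk.injEq, BTree.node.injEq] at h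
        · simp [h.1]
        · exfalso; rw [h.1] at hs; simp at hs; omega
        · exfalso; rw [h.2] at hs; simp at hs; omega
        · simp [h.2]
      · rintro ⟨t, hc, hs⟩
        cases t with
        | leaf => simp at hs; omega
        | node l r =>
          simp only [size_node] at hs
          rcases hc.1 with hl | hr
          · subst hl
            exact ⟨(true, ⟨r, hc.2.2, by simp at hs ⊢; omega⟩), rfl⟩
          · subst hr
            exact ⟨(false, ⟨l, hc.2.1, by simp at hs ⊢; omega⟩), rfl⟩
    rw [← key, Nat.card_prod, ih]
    rw [show m + 1 - 2 = (m - 2) + 1 by omega, pow_succ]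
    simp [mul_comm]

end BTree

open BTree

/-- Convenient form of `fcount`. -/
lemma fcount_eq (k n : ℕ) :
    fcount k n = Nat.card {t : BTree // t.size = n ∧ Good k t} :=
  Nat.card_congr (Equiv.subtypeEquivRight fun t =>
    and_congr_right fun _ => gamma_le_iff k t)

lemma fcount_zero (k : ℕ) : fcount k 0 = 0 := by
  rw [fcount_eq]
  have : IsEmpty {t : BTree // t.size = 0 ∧ Good k t} := by
    constructor; rintro ⟨t, ht, -⟩; have := one_le_size t; omega
  simp

lemma fcount_one (k : ℕ) (hk : 1 ≤ k) : fcount k 1 = 1 := by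
  rw [fcount_eq]
  rw [← Nat.card_eq_of_bijective (fun _ : Unit =>
    (⟨BTree.leaf, rfl, fun s hs _ => by simp [BTree.subtrees] at hs; subst hs; simpa⟩ :
      {t : BTree // t.size = 1 ∧ Good k t})) ?_]
  · simp
  constructor
  · intro a b _; rfl
  · rintro ⟨t, ht, hg⟩
    cases t with
    | leaf => exact ⟨(), rfl⟩
    | node l r =>
      have := one_le_size l; have := one_le_size r
      simp at ht; omega

lemma nat_card_sigma {ι : Type*} [Fintype ι] (f : ι → Type*) [∀ i, Finite (f i)] :
    Nat.card (Σ i, f i) = ∑ i, Nat.card (f i) := by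
  letI : ∀ i, Fintype (f i) := fun i => Fintype.ofFinite _
  simp [Nat.card_eq_fintype_card, Fintype.card_sigma]

/-- The convolution identity: card of "good pairs" of total size `n`. -/
lemma card_A (k n : ℕ) :
    Nat.card {p : BTree × BTree // p.1.size + p.2.size = n ∧ Good k p.1 ∧ Good k p.2} =
      ∑ p ∈ Finset.HasAntidiagonal.antidiagonal n, fcount k p.1 * fcount k p.2 := by
  have e : Nat.card
      ((q : {q : ℕ × ℕ // q ∈ Finset.HasAntidiagonal.antidiagonal n}) ×
        ({t : BTree // t.size = q.1.1 ∧ Good k t} × {t : BTree // t.size = q.1.2 ∧ Good k t})) =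
      Nat.card {p : BTree × BTree // p.1.size + p.2.size = n ∧ Good k p.1 ∧ Good k p.2} := by
    apply Nat.card_eq_of_bijective (fun x =>
      ⟨(x.2.1.1, x.2.2.1), by
        have h1 := x.2.1.2
        have h2 := x.2.2.2
        have h3 := x.1.2
        rw [Finset.HasAntidiagonal.mem_antidiagonal] at h3
        exact ⟨by rw [h1.1, h2.1]; exact h3, h1.2, h2.2⟩⟩)
    constructor
    · rintro ⟨⟨⟨a, b⟩, hq⟩, ⟨l, hl1, hl2⟩, ⟨r, hr1, hr2⟩⟩
        ⟨⟨⟨a', b'⟩, hq'⟩, ⟨l', hl1', hl2'⟩, ⟨r', hr1', hr2'⟩⟩ h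
      simp only [Subtype.mk.injEq, Prod.mk.injEq] at h
      obtain ⟨h1, h2⟩ := h
      subst h1; subst h2
      dsimp only at hl1 hr1 hl1' hr1'
      subst hl1; subst hr1; subst hl1'; subst hr1'
      rfl
    · rintro ⟨⟨l, r⟩, hs, hgl, hgr⟩
      exact ⟨⟨⟨(l.size, r.size), Finset.HasAntidiagonal.mem_antidiagonal.mpr hs⟩,
        ⟨l, rfl, hgl⟩, ⟨r, rfl, hgr⟩⟩, rfl⟩
  rw [← e, nat_card_sigma]
  rw [← Finset.sum_coe_sort (Finset.HasAntidiagonal.antidiagonal n)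
    (fun p => fcount k p.1 * fcount k p.2)]
  congr 1
  funext q
  rw [Nat.card_prod, fcount_eq, fcount_eq]

/-- Splitting good trees plus bad pairs as all good pairs, for `n ≠ 1`. -/
lemma card_split (k n : ℕ) (hn : n ≠ 1) :
    Nat.card {p : BTree × BTree // p.1.size + p.2.size = n ∧ Good k p.1 ∧ Good k p.2} =
      Nat.card {t : BTree // t.size = n ∧ Good k t} +
      Nat.card {p : BTree × BTree // p.1.size + p.2.size = n ∧ Good k p.1 ∧ Good k p.2 ∧
        (BTree.node p.1 p.2).isCaterpillar ∧ k < n} := by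
  rw [← Nat.card_sum]
  apply Nat.card_eq_of_bijective (fun p =>
    if hc : (BTree.node p.1.1 p.1.2).isCaterpillar ∧ k < n
    then Sum.inr ⟨p.1, p.2.1, p.2.2.1, p.2.2.2, hc.1, hc.2⟩
    else Sum.inl ⟨BTree.node p.1.1 p.1.2, by simpa using p.2.1,
      (good_node_iff k _ _).mpr ⟨p.2.2.1, p.2.2.2, fun hcat => by
        have h1 := p.2.1
        have h2 := not_and.mp hc hcat
        omega⟩⟩)
  constructor
  · intro p q h
    dsimp only at h
    by_cases hp : (BTree.node p.1.1 p.1.2).isCaterpillar ∧ k < n <;>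
      by_cases hq : (BTree.node q.1.1 q.1.2).isCaterpillar ∧ k < n
    · rw [dif_pos hp, dif_pos hq, Sum.inr.injEq, Subtype.mk.injEq] at h
      exact Subtype.ext h
    · rw [dif_pos hp, dif_neg hq] at h; simp at h
    · rw [dif_neg hp, dif_pos hq] at h; simp at h
    · rw [dif_neg hp, dif_neg hq, Sum.inl.injEq, Subtype.mk.injEq, BTree.node.injEq] at h
      exact Subtype.ext (Prod.ext h.1 h.2)
  · rintro (⟨t, ht, hg⟩ | ⟨⟨l, r⟩, hs, hgl, hgr, hc, hkn⟩)
    · cases t with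
      | leaf => exact absurd ht.symm (by simpa using hn)
      | node l r =>
        obtain ⟨hgl, hgr, hcat⟩ := (good_node_iff k l r).mp hg
        have hnb : ¬((BTree.node l r).isCaterpillar ∧ k < n) := by
          rintro ⟨hc, hkn⟩
          have h1 := hcat hc
          simp only [size_node] at ht
          omega
        refine ⟨⟨(l, r), by simpa using ht, hgl, hgr⟩, ?_⟩
        dsimp only
        rw [dif_neg hnb]
    · refine ⟨⟨(l, r), hs, hgl, hgr⟩, ?_⟩
      dsimp only
      rw [dif_pos ⟨hc, hkn⟩]

lemma card_bad_ne (k n : ℕ) (hne : n ≠ k + 1) :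
    Nat.card {p : BTree × BTree // p.1.size + p.2.size = n ∧ Good k p.1 ∧ Good k p.2 ∧
      (BTree.node p.1 p.2).isCaterpillar ∧ k < n} = 0 := by
  have : IsEmpty {p : BTree × BTree // p.1.size + p.2.size = n ∧ Good k p.1 ∧ Good k p.2 ∧
      (BTree.node p.1 p.2).isCaterpillar ∧ k < n} := by
    constructor
    rintro ⟨⟨l, r⟩, hs, hgl, hgr, hc, hkn⟩
    dsimp only at hs hgl hgr hc
    rcases hc.1 with hl | hr
    · subst hl
      have := size_le_of_good_cat hgr hc.2.2
      simp only [size_leaf] at hs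
      omega
    · subst hr
      have := size_le_of_good_cat hgl hc.2.1
      simp only [size_leaf] at hs
      omega
  simp

lemma card_bad_eq (k : ℕ) (hk : 2 ≤ k) :
    Nat.card {p : BTree × BTree // p.1.size + p.2.size = k + 1 ∧ Good k p.1 ∧ Good k p.2 ∧
      (BTree.node p.1 p.2).isCaterpillar ∧ k < k + 1} = 2 ^ (k - 1) := by
  have key : Nat.card ({t : BTree // t.isCaterpillar ∧ t.size = k} ⊕
      {t : BTree // t.isCaterpillar ∧ t.size = k}) =
      Nat.card {p : BTree × BTree // p.1.size + p.2.size = k + 1 ∧ Good k p.1 ∧ Good k p.2 ∧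
        (BTree.node p.1 p.2).isCaterpillar ∧ k < k + 1} := by
    apply Nat.card_eq_of_bijective (fun x =>
      match x with
      | Sum.inl ⟨c, hc, hs⟩ => ⟨(BTree.leaf, c), by simp [hs]; omega,
          good_of_cat (by simp only [size_leaf]; omega),
          good_of_cat (le_of_eq hs), ⟨Or.inl rfl, trivial, hc⟩, by omega⟩
      | Sum.inr ⟨c, hc, hs⟩ => ⟨(c, BTree.leaf), by simp [hs],
          good_of_cat (le_of_eq hs),
          good_of_cat (by simp only [size_leaf]; omega),
          ⟨Or.inr rfl, hc, trivial⟩, by omega⟩)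
    constructor
    · rintro (⟨c, hc, hs⟩ | ⟨c, hc, hs⟩) (⟨c', hc', hs'⟩ | ⟨c', hc', hs'⟩) h <;>
        simp only [Subtype.mk.injEq, Prod.mk.injEq] at h
      · simp [h.2]
      · exfalso; rw [h.2] at hs; simp at hs; omega
      · exfalso; rw [h.1] at hs; simp at hs; omega
      · simp [h.1]
    · rintro ⟨⟨l, r⟩, hs, hgl, hgr, hc, hkn⟩
      dsimp only at hs hgl hgr hc
      rcases hc.1 with hl | hr
      · subst hl
        refine ⟨Sum.inl ⟨r, hc.2.2, by simp at hs; omega⟩, rfl⟩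
      · subst hr
        refine ⟨Sum.inr ⟨l, hc.2.1, by simp at hs; omega⟩, rfl⟩
  rw [← key, Nat.card_sum, card_cat k hk]
  rw [show k - 1 = (k - 2) + 1 by omega, pow_succ]
  omega

/-- The key counting identity on natural numbers. -/
lemma key_identity (k n : ℕ) (hk : 2 ≤ k) :
    fcount k n + (if n = k + 1 then 2 ^ (k - 1) else 0) =
      (if n = 1 then 1 else 0) +
        ∑ p ∈ Finset.HasAntidiagonal.antidiagonal n, fcount k p.1 * fcount k p.2 := by
  by_cases hn : n = 1
  · subst hn
    rw [if_neg (by omega), if_pos rfl, fcount_one k (by omega)]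
    have hz : ∑ p ∈ Finset.HasAntidiagonal.antidiagonal 1, fcount k p.1 * fcount k p.2 = 0 := by
      apply Finset.sum_eq_zero
      rintro ⟨a, b⟩ hp
      rw [Finset.HasAntidiagonal.mem_antidiagonal] at hp
      dsimp only at hp ⊢
      rcases Nat.le_one_iff_eq_zero_or_eq_one.mp (show a ≤ 1 by omega) with h | h
      · rw [h, fcount_zero, zero_mul]
      · have hb : b = 0 := by omega
        rw [hb, fcount_zero, mul_zero]
    rw [hz]
  · rw [if_neg hn, ← card_A, card_split k n hn, fcount_eq]
    by_cases hnk : n = k + 1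
    · subst hnk
      rw [if_pos rfl, card_bad_eq k hk]
      omega
    · rw [if_neg hnk, card_bad_ne k n hnk]
      omega

/-- The generating function `F_k(x) = Σ_n f_k(n) x^n` (as a formal power series over ℚ)
satisfies `F_k = x + F_k² − 2^{k−1} x^{k+1}` for `k ≥ 2`. -/
theorem fgen_functional_equation (k : ℕ) (hk : 2 ≤ k) :
    (PowerSeries.mk fun n => (fcount k n : ℚ)) =
      PowerSeries.X + (PowerSeries.mk fun n => (fcount k n : ℚ)) ^ 2 -
        PowerSeries.C (R := ℚ) (2 ^ (k - 1)) * PowerSeries.X ^ (k + 1) := by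
  ext n
  have h := key_identity k n hk
  have h' : ((fcount k n : ℚ)) + (if n = k + 1 then (2 : ℚ) ^ (k - 1) else 0) =
      (if n = 1 then 1 else 0) +
        ∑ p ∈ Finset.HasAntidiagonal.antidiagonal n, (fcount k p.1 : ℚ) * (fcount k p.2 : ℚ) := by
    exact_mod_cast congrArg (fun x : ℕ => (x : ℚ)) h
  simp only [map_sub, map_add, PowerSeries.coeff_mk, PowerSeries.coeff_X, pow_two]
  rw [PowerSeries.coeff_C_mul, PowerSeries.coeff_X_pow, PowerSeries.coeff_mul]
  simp only [PowerSeries.coeff_mk]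
  rw [mul_ite, mul_one, mul_zero]
  split_ifs at h' ⊢ <;> linarith
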